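/- For the path graph P_n with n ≥ 3, the super domination number equals ⌈n/2⌉. -/

import Mathlib

open SimpleGraph

/-- A super dominating set: a dominating set `S` such that every vertex `u ∉ S`
has a private "super" dominator `v ∈ S` with `N(v) ∩ (V \ S) = {u}`. -/
def IsSuperDominatingSet {V : Type*} (G : SimpleGraph V) (S : Finset V) : Prop :=
  (∀ u ∉ S, ∃ v ∈ S, G.Adj v u) ∧
  (∀ u ∉ S, ∃ v ∈ S, ∀ w, (G.Adj v w ∧ w ∉ S) ↔ w = u)

/-- The super domination number: minimum size of a super dominating set. -/
noncomputable def superDominationNumber {V : Type*} (G : SimpleGraph V) : ℕ :=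
  sInf {n | ∃ S : Finset V, IsSuperDominatingSet G S ∧ S.card = n}

instance instPathAdjDec (n : ℕ) : DecidableRel (SimpleGraph.pathGraph n).Adj :=
  fun _ _ => decidable_of_iff _ (SimpleGraph.pathGraph_adj).symm

lemma sds_card_lb {V : Type*} [Fintype V] [DecidableEq V] {G : SimpleGraph V} {S : Finset V}
    (h : IsSuperDominatingSet G S) : Fintype.card V ≤ 2 * S.card := by
  classical
  obtain ⟨-, h2⟩ := h
  have key : Sᶜ.card ≤ S.card := by
    apply Finset.card_le_card_of_injOn
      (f := fun u => if hu : u ∉ S then (h2 u hu).choose else u)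
    · intro u hu
      simp only [Finset.coe_compl, Set.mem_compl_iff, Finset.mem_coe, Finset.mem_compl] at hu
      simp only [dif_pos hu]
      exact (h2 u hu).choose_spec.1
    · intro u1 hu1 u2 hu2 heq
      simp only [Finset.coe_compl, Set.mem_compl_iff, Finset.mem_coe] at hu1 hu2
      simp only [dif_pos hu1, dif_pos hu2] at heq
      have s1 := (h2 u1 hu1).choose_spec.2
      have s2 := (h2 u2 hu2).choose_spec.2
      have a2 : G.Adj (h2 u2 hu2).choose u2 ∧ u2 ∉ S := (s2 u2).mpr rfl
      rw [← heq] at a2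
      exact ((s1 u2).mp a2).symm
  have := S.card_add_card_compl
  omega

lemma sds_step (m : ℕ) (hm : 3 ≤ m) (S : Finset (Fin m))
    (h : IsSuperDominatingSet (SimpleGraph.pathGraph m) S)
    (hlast : (⟨m - 1, by omega⟩ : Fin m) ∈ S) :
    ∃ T : Finset (Fin (m + 4)), IsSuperDominatingSet (SimpleGraph.pathGraph (m + 4)) T ∧
      T.card = S.card + 2 ∧ (⟨m + 3, by omega⟩ : Fin (m + 4)) ∈ T := by
  classical
  set a : Fin (m+4) := ⟨m, by omega⟩ with ha
  set b : Fin (m+4) := ⟨m+3, by omega⟩ with hb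
  have hav : (a : ℕ) = m := rfl
  have hbv : (b : ℕ) = m + 3 := rfl
  set T : Finset (Fin (m+4)) := S.map (Fin.castLEEmb (by omega)) ∪ {a, b} with hT
  have memT : ∀ x : Fin (m+4),
      x ∈ T ↔ ((∃ hx : x.val < m, (⟨x.val, hx⟩ : Fin m) ∈ S) ∨ x.val = m ∨ x.val = m+3) := by
    intro x
    simp only [hT, Finset.mem_union, Finset.mem_map, Fin.castLEEmb_apply,
      Finset.mem_insert, Finset.mem_singleton, Fin.ext_iff, ha, hb]
    constructor
    · rintro (⟨y, hy, hyx⟩ | h | h)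
      · refine Or.inl ⟨by simp [← hyx, y.isLt], ?_⟩
        have : (⟨x.val, by simp [← hyx, y.isLt]⟩ : Fin m) = y := by
          apply Fin.ext; simp [← hyx]
        rwa [this]
      · exact Or.inr (Or.inl h)
      · exact Or.inr (Or.inr h)
    · rintro (⟨hx, hmem⟩ | h | h)
      · exact Or.inl ⟨⟨x.val, hx⟩, hmem, rfl⟩
      · exact Or.inr (Or.inl h)
      · exact Or.inr (Or.inr h)
  have adjIff : ∀ u v : Fin (m+4), (SimpleGraph.pathGraph (m+4)).Adj u v ↔
      (u.val + 1 = v.val ∨ v.val + 1 = u.val) := fun u v => SimpleGraph.pathGraph_adj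
  have adjIffS : ∀ u v : Fin m, (SimpleGraph.pathGraph m).Adj u v ↔
      (u.val + 1 = v.val ∨ v.val + 1 = u.val) := fun u v => SimpleGraph.pathGraph_adj
  refine ⟨T, ⟨?_, ?_⟩, ?_, (memT b).mpr (Or.inr (Or.inr rfl))⟩
  · -- domination
    intro u hu
    rw [memT] at hu
    push_neg at hu
    obtain ⟨hu1, hu2, hu3⟩ := hu
    by_cases hum : u.val < m
    · obtain ⟨v, hv, hadj⟩ := h.1 ⟨u.val, hum⟩ (hu1 hum)
      refine ⟨Fin.castLE (by omega) v, (memT _).mpr (Or.inl ⟨v.isLt, by simpa using hv⟩), ?_⟩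
      rw [adjIff]
      rw [adjIffS] at hadj
      simpa using hadj
    · -- u.val = m+1 or m+2
      have : u.val = m + 1 ∨ u.val = m + 2 := by
        have := u.isLt; omega
      rcases this with h' | h'
      · exact ⟨a, (memT a).mpr (Or.inr (Or.inl rfl)), by rw [adjIff]; rw [hav]; omega⟩
      · exact ⟨b, (memT b).mpr (Or.inr (Or.inr rfl)), by rw [adjIff]; rw [hbv]; omega⟩
  · -- super domination
    intro u hu
    have huT := hu
    rw [memT] at hu
    push_neg at hu
    obtain ⟨hu1, hu2, hu3⟩ := hu
    by_cases hum : u.val < m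
    · obtain ⟨v, hv, hspec⟩ := h.2 ⟨u.val, hum⟩ (hu1 hum)
      refine ⟨Fin.castLE (by omega) v, (memT _).mpr (Or.inl ⟨v.isLt, by simpa using hv⟩), ?_⟩
      intro w
      constructor
      · rintro ⟨hadj, hwT⟩
        rw [adjIff] at hadj
        simp only [Fin.coe_castLE] at hadj
        have hvm := v.isLt
        have hwcase : w.val < m ∨ w.val = m := by omega
        rcases hwcase with hwm | hwm
        · have hwS : (⟨w.val, hwm⟩ : Fin m) ∉ S := by
            intro hc
            exact hwT ((memT w).mpr (Or.inl ⟨hwm, hc⟩))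
          have := (hspec ⟨w.val, hwm⟩).mp ⟨by rw [adjIffS]; simpa using hadj, hwS⟩
          apply Fin.ext
          simpa [Fin.ext_iff] using this
        · exact absurd ((memT w).mpr (Or.inr (Or.inl hwm))) hwT
      · rintro rfl
        have := (hspec ⟨_, hum⟩).mpr rfl
        refine ⟨?_, huT⟩
        rw [adjIff]
        rw [adjIffS] at this
        simpa using this.1
    · have hucase : u.val = m + 1 ∨ u.val = m + 2 := by
        have := u.isLt; omega
      rcases hucase with h' | h'
      · refine ⟨a, (memT a).mpr (Or.inr (Or.inl rfl)), ?_⟩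
        intro w
        constructor
        · rintro ⟨hadj, hwT⟩
          rw [adjIff] at hadj
          rw [hav] at hadj
          have hwcase : w.val = m + 1 ∨ w.val = m - 1 := by omega
          rcases hwcase with hw | hw
          · apply Fin.ext; omega
          · exfalso
            apply hwT
            refine (memT w).mpr (Or.inl ⟨by omega, ?_⟩)
            have : (⟨w.val, by omega⟩ : Fin m) = ⟨m - 1, by omega⟩ := by
              apply Fin.ext; simpa using hw
            rwa [this]
        · rintro rfl
          exact ⟨by rw [adjIff]; rw [hav]; omega, huT⟩
      · refine ⟨b, (memT b).mpr (Or.inr (Or.inr rfl)), ?_⟩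
        intro w
        constructor
        · rintro ⟨hadj, hwT⟩
          rw [adjIff] at hadj
          rw [hbv] at hadj
          have := w.isLt
          apply Fin.ext; omega
        · rintro rfl
          exact ⟨by rw [adjIff]; rw [hbv]; omega, huT⟩
  · -- cardinality
    rw [hT, Finset.card_union_of_disjoint, Finset.card_map]
    · congr 1
      rw [Finset.card_insert_of_notMem, Finset.card_singleton]
      simp [ha, hb, Fin.ext_iff]
    · rw [Finset.disjoint_left]
      rintro x hx hx'
      simp only [Finset.mem_map, Fin.castLEEmb_apply] at hx
      obtain ⟨y, -, rfl⟩ := hx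
      have := y.isLt
      simp only [Finset.mem_insert, Finset.mem_singleton, Fin.ext_iff, ha, hb,
        Fin.coe_castLE] at hx'
      omega

theorem sds_exists (n : ℕ) (hn : 3 ≤ n) :
    ∃ S : Finset (Fin n), IsSuperDominatingSet (SimpleGraph.pathGraph n) S ∧
      S.card = (n + 1) / 2 ∧ (⟨n - 1, by omega⟩ : Fin n) ∈ S := by
  rcases lt_or_ge n 7 with h7 | h7
  · interval_cases n
    · refine ⟨{1, 2}, ?_, ?_, ?_⟩ <;> first | (unfold IsSuperDominatingSet; decide) | decide | simp [Fin.ext_iff]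
    · refine ⟨{0, 3}, ?_, ?_, ?_⟩ <;> first | (unfold IsSuperDominatingSet; decide) | decide | simp [Fin.ext_iff]
    · refine ⟨{1, 2, 4}, ?_, ?_, ?_⟩ <;> first | (unfold IsSuperDominatingSet; decide) | decide | simp [Fin.ext_iff]
    · refine ⟨{1, 2, 5}, ?_, ?_, ?_⟩ <;> first | (unfold IsSuperDominatingSet; decide) | decide | simp [Fin.ext_iff]
  · obtain ⟨m, hm3, rfl⟩ : ∃ m, 3 ≤ m ∧ n = m + 4 := ⟨n - 4, by omega, by omega⟩
    obtain ⟨S, hS, hcard, hlast⟩ := sds_exists m hm3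
    obtain ⟨T, hT, hTcard, hTlast⟩ := sds_step m hm3 S hS hlast
    refine ⟨T, hT, by omega, ?_⟩
    exact hTlast
termination_by n

/-- For the path graph `P n` with `n ≥ 3`, `γ_sp(P n) = ⌈n/2⌉`. -/
theorem stmt1 (n : ℕ) (hn : 3 ≤ n) :
    superDominationNumber (SimpleGraph.pathGraph n) = (n + 1) / 2 := by
  obtain ⟨S, hS, hcard, -⟩ := sds_exists n hn
  apply le_antisymm
  · exact Nat.sInf_le ⟨S, hS, hcard⟩
  · refine le_csInf ⟨S.card, S, hS, rfl⟩ ?_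
    rintro m ⟨T, hT, rfl⟩
    have hlb := sds_card_lb hT
    simp only [Fintype.card_fin] at hlb
    omega
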